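/- arXiv:1010.0382 — 5 statements merged into one kernel-verified Lean document; each statement's English description precedes it below -/
import Mathlib

section
/- Let n : ℕ and let R ⊆ FreeGroup (Fin n) be a set of relators such that the presentation ⟨Fin n; R⟩ is recursively presented, i.e., REPred (fun l : List (Fin n × Bool) => FreeGroup.mk l ∈ R). Then the 'yes' part of the word problem for the presented group is recursively enumerable: REPred (fun l : List (Fin n × Bool) => FreeGroup.mk l ∈ Subgroup.normalClosure R). -/
open Nat.Partrec (Code)
open Nat.Partrec.Code

theorem rePred_of_exists {α} [Primcodable α] {D : α → ℕ → Bool} (hD : Computable₂ D)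
    {p : α → Prop} (h : ∀ a, p a ↔ ∃ k, D a k = true) : REPred p := by
  have hf : Partrec fun a => Nat.rfind (fun k => (Part.some (D a k) : Part Bool) : ℕ →. Bool) :=
    Partrec.rfind hD.partrec₂
  refine hf.dom_re.of_eq fun a => ?_
  refine Nat.rfind_dom.trans ?_
  constructor
  · rintro ⟨m, hm, -⟩
    exact (h a).2 ⟨m, by simpa using hm⟩
  · rintro hpa
    obtain ⟨k, hk⟩ := (h a).1 hpa
    exact ⟨k, by simpa using hk, fun {_} _ => trivial⟩

theorem exists_of_rePred {α} [Primcodable α] {p : α → Prop} (h : REPred p) :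
    ∃ D : α → ℕ → Bool, Primrec₂ D ∧
      (∀ a k₁ k₂, k₁ ≤ k₂ → D a k₁ = true → D a k₂ = true) ∧
      ∀ a, p a ↔ ∃ k, D a k = true := by
  obtain ⟨c, hc⟩ := exists_code.1 h
  have key : ∀ a : α, p a ↔ (eval c (Encodable.encode a)).Dom := by
    intro a
    rw [hc]
    simp [Encodable.encodek, Part.assert]
  refine ⟨fun a k => (evaln k c (Encodable.encode a)).isSome, ?_, ?_, ?_⟩
  · exact Primrec.option_isSome.comp
      (primrec_evaln.comp <| ((Primrec.snd.pair (Primrec.const c)).pair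
        (Primrec.encode.comp Primrec.fst))) |>.to₂
  · intro a k₁ k₂ hk h1
    obtain ⟨x, hx⟩ := Option.isSome_iff_exists.1 h1
    exact Option.isSome_iff_exists.2 ⟨x, evaln_mono hk hx⟩
  · intro a
    rw [key, Part.dom_iff_mem]
    constructor
    · rintro ⟨x, hx⟩
      obtain ⟨k, hk⟩ := evaln_complete.1 hx
      exact ⟨k, Option.isSome_iff_exists.2 ⟨x, hk⟩⟩
    · rintro ⟨k, hk⟩
      obtain ⟨x, hx⟩ := Option.isSome_iff_exists.1 hk
      exact ⟨x, evaln_complete.2 ⟨k, hx⟩⟩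

variable {n : ℕ}

/-- The group element represented by a triple `(w, r, b)`: the conjugate `w r^±1 w⁻¹`. -/
def elemOf (t : List (Fin n × Bool) × List (Fin n × Bool) × Bool) : FreeGroup (Fin n) :=
  FreeGroup.mk t.1 * (cond t.2.2 (FreeGroup.mk t.2.1) (FreeGroup.mk t.2.1)⁻¹) *
    (FreeGroup.mk t.1)⁻¹

/-- The word representing `elemOf t`. -/
def wordOf (t : List (Fin n × Bool) × List (Fin n × Bool) × Bool) : List (Fin n × Bool) :=
  t.1 ++ (cond t.2.2 t.2.1 (FreeGroup.invRev t.2.1)) ++ FreeGroup.invRev t.1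

theorem elemOf_eq_mk (t : List (Fin n × Bool) × List (Fin n × Bool) × Bool) :
    elemOf t = FreeGroup.mk (wordOf t) := by
  obtain ⟨w, r, b⟩ := t
  cases b <;> simp [elemOf, wordOf, FreeGroup.mul_mk, FreeGroup.inv_mk]

theorem mk_flatten : ∀ ls : List (List (Fin n × Bool)),
    FreeGroup.mk ls.flatten = (ls.map FreeGroup.mk).prod
  | [] => rfl
  | a :: ls => by
    simp only [List.flatten_cons, List.map_cons, List.prod_cons, ← FreeGroup.mul_mk,
      mk_flatten ls]

theorem elemOf_flip (t : List (Fin n × Bool) × List (Fin n × Bool) × Bool) :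
    elemOf (t.1, t.2.1, !t.2.2) = (elemOf t)⁻¹ := by
  obtain ⟨w, r, b⟩ := t
  cases b <;> simp only [elemOf, Bool.not_false, Bool.not_true, cond_true, cond_false] <;> group

theorem mem_normalClosure_iff {R : Set (FreeGroup (Fin n))} {x : FreeGroup (Fin n)} :
    x ∈ Subgroup.normalClosure R ↔
      ∃ L : List (List (Fin n × Bool) × List (Fin n × Bool) × Bool),
        (∀ t ∈ L, FreeGroup.mk t.2.1 ∈ R) ∧ x = (L.map elemOf).prod := by
  constructor
  · intro hx
    refine Subgroup.closure_induction (fun y hy => ?_) ?_ (fun y z _ _ hy hz => ?_)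
      (fun y _ hy => ?_) hx
    · obtain ⟨r, hr, hconj⟩ := Group.mem_conjugatesOfSet_iff.1 hy
      obtain ⟨c, hc⟩ := isConj_iff.1 hconj
      refine ⟨[(c.toWord, r.toWord, true)], ?_, ?_⟩
      · simpa [FreeGroup.mk_toWord] using hr
      · simp [elemOf, FreeGroup.mk_toWord, hc]
    · exact ⟨[], by simp, by simp⟩
    · obtain ⟨L₁, h₁, e₁⟩ := hy
      obtain ⟨L₂, h₂, e₂⟩ := hz
      refine ⟨L₁ ++ L₂, ?_, ?_⟩
      · intro t ht
        rcases List.mem_append.1 ht with h | h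
        · exact h₁ t h
        · exact h₂ t h
      · simp [e₁, e₂]
    · obtain ⟨L, hL, eL⟩ := hy
      refine ⟨(L.map fun t => (t.1, t.2.1, !t.2.2)).reverse, ?_, ?_⟩
      · intro t ht
        simp only [List.mem_reverse, List.mem_map] at ht
        obtain ⟨s, hs, rfl⟩ := ht
        exact hL s hs
      · rw [eL, List.prod_inv_reverse, List.map_reverse]
        congr 1
        rw [List.map_map, List.map_map]
        exact congrArg List.reverse
          (List.map_congr_left fun t _ => (elemOf_flip t).symm)
  · rintro ⟨L, hL, rfl⟩
    refine Subgroup.list_prod_mem _ fun y hy => ?_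
    simp only [List.mem_map] at hy
    obtain ⟨t, ht, rfl⟩ := hy
    have hr : FreeGroup.mk t.2.1 ∈ Subgroup.normalClosure R :=
      Subgroup.subset_normalClosure (hL t ht)
    have hr' : cond t.2.2 (FreeGroup.mk t.2.1) (FreeGroup.mk t.2.1)⁻¹ ∈
        Subgroup.normalClosure R := by
      cases h : t.2.2
      · exact Subgroup.inv_mem _ hr
      · exact hr
    simpa [elemOf, mul_assoc] using
      Subgroup.normalClosure_normal.conj_mem _ hr' (FreeGroup.mk t.1)

theorem primrec_invRev {α} [Primcodable α] :
    Primrec (FreeGroup.invRev : List (α × Bool) → List (α × Bool)) := by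
  have hmap : Primrec fun l : List (α × Bool) =>
      l.map fun g => (g.1, !g.2) :=
    Primrec.list_map Primrec.id
      ((Primrec.fst.comp Primrec.snd).pair
        (Primrec.not.comp (Primrec.snd.comp Primrec.snd))).to₂
  exact Primrec.list_reverse.comp hmap

theorem primrec_reduce {α} [Primcodable α] [DecidableEq α] :
    Primrec (FreeGroup.reduce : List (α × Bool) → List (α × Bool)) := by
  have hstep : Primrec fun x : List (α × Bool) × ((α × Bool) × List (α × Bool) × List (α × Bool)) =>
      (List.casesOn x.2.2.2 [x.2.1] fun hd2 tl2 =>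
        if x.2.1.1 = hd2.1 ∧ x.2.1.2 = !hd2.2 then tl2 else x.2.1 :: hd2 :: tl2 :
          List (α × Bool)) := by
    have hhd1 : Primrec fun x : List (α × Bool) × ((α × Bool) × List (α × Bool) × List (α × Bool)) =>
        x.2.1 := Primrec.fst.comp Primrec.snd
    refine Primrec.list_casesOn
      (f := fun (x : List (α × Bool) × ((α × Bool) × List (α × Bool) × List (α × Bool))) => x.2.2.2) (g := fun (x : List (α × Bool) × ((α × Bool) × List (α × Bool) × List (α × Bool))) => [x.2.1])
      (h := fun (x : List (α × Bool) × ((α × Bool) × List (α × Bool) × List (α × Bool))) (y : (α × Bool) × List (α × Bool)) => if x.2.1.1 = y.1.1 ∧ x.2.1.2 = !y.1.2 then y.2 else x.2.1 :: y.1 :: y.2)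
      (Primrec.snd.comp (Primrec.snd.comp Primrec.snd))
      (Primrec.list_cons.comp (g := fun (x : List (α × Bool) × ((α × Bool) × List (α × Bool) × List (α × Bool))) => x.2.1) (h := fun (_ : List (α × Bool) × ((α × Bool) × List (α × Bool) × List (α × Bool))) => ([] : List (α × Bool))) hhd1 (Primrec.const []))
      ?_
    have hx21 : Primrec fun z : (List (α × Bool) × ((α × Bool) × List (α × Bool) × List (α × Bool))) ×
        ((α × Bool) × List (α × Bool)) => z.1.2.1 :=
      Primrec.fst.comp (Primrec.snd.comp Primrec.fst)
    have hy1 : Primrec fun z : (List (α × Bool) × ((α × Bool) × List (α × Bool) × List (α × Bool))) ×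
        ((α × Bool) × List (α × Bool)) => z.2.1 := Primrec.fst.comp Primrec.snd
    have hy2 : Primrec fun z : (List (α × Bool) × ((α × Bool) × List (α × Bool) × List (α × Bool))) ×
        ((α × Bool) × List (α × Bool)) => z.2.2 := Primrec.snd.comp Primrec.snd
    refine Primrec.ite ?_ hy2 (Primrec.list_cons.comp hx21 (Primrec.list_cons.comp hy1 hy2))
    have c1 : PrimrecPred fun z : (List (α × Bool) × ((α × Bool) × List (α × Bool) × List (α × Bool))) ×
        ((α × Bool) × List (α × Bool)) => z.1.2.1.1 = z.2.1.1 :=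
      Primrec.eq.comp (Primrec.fst.comp hx21) (Primrec.fst.comp hy1)
    have c2 : PrimrecPred fun z : (List (α × Bool) × ((α × Bool) × List (α × Bool) × List (α × Bool))) ×
        ((α × Bool) × List (α × Bool)) => z.1.2.1.2 = !z.2.1.2 :=
      Primrec.eq.comp (Primrec.snd.comp hx21) (Primrec.not.comp (Primrec.snd.comp hy1))
    exact c1.and c2
  have := Primrec.list_rec (Primrec.id (α := List (α × Bool)))
    (Primrec.const ([] : List (α × Bool))) hstep.to₂
  exact this.of_eq fun l => by
    induction l with
    | nil => rfl
    | cons a l ih =>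
      exact congrArg (fun X : List (α × Bool) => (List.casesOn X [a]
        (fun head tail => if a.1 = head.1 ∧ a.2 = !head.2 then tail else a :: head :: tail) :
          List (α × Bool))) ih

theorem mk_eq_mk_iff {α} [DecidableEq α] {a b : List (α × Bool)} :
    FreeGroup.mk a = FreeGroup.mk b ↔ FreeGroup.reduce a = FreeGroup.reduce b := by
  constructor
  · intro h
    rw [← FreeGroup.toWord_mk, ← FreeGroup.toWord_mk, h]
  · intro h
    apply FreeGroup.toWord_injective
    rw [FreeGroup.toWord_mk, FreeGroup.toWord_mk, h]

/-- The verifier for the word problem: `m` codes a pair `(L, k)` where `L` is a list of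
triples witnessing a product of conjugates of relators and `k` is a uniform time bound for
the relator-membership semidecisions. -/
def chkFun {n : ℕ} (D : List (Fin n × Bool) → ℕ → Bool) :
    List (Fin n × Bool) → ℕ → Bool := fun l m =>
  Option.casesOn
    (Encodable.decode (α := List (List (Fin n × Bool) × List (Fin n × Bool) × Bool) × ℕ) m)
    false fun q =>
      (q.1.foldr (fun t acc => D t.2.1 q.2 && acc) true) &&
        decide (FreeGroup.reduce (q.1.map wordOf).flatten = FreeGroup.reduce l)

theorem primrec_wordOf {n : ℕ} : Primrec (wordOf (n := n)) := by
  have hinv := primrec_invRev (α := Fin n)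
  have hcond : Primrec fun t : List (Fin n × Bool) × List (Fin n × Bool) × Bool =>
      cond t.2.2 t.2.1 (FreeGroup.invRev t.2.1) :=
    Primrec.cond (Primrec.snd.comp Primrec.snd) (Primrec.fst.comp Primrec.snd)
      (hinv.comp (Primrec.fst.comp Primrec.snd))
  exact Primrec.list_append.comp
    (Primrec.list_append.comp Primrec.fst hcond) (hinv.comp Primrec.fst)

theorem primrec_chkFun {n : ℕ} {D : List (Fin n × Bool) → ℕ → Bool} (hDP : Primrec₂ D) :
    Primrec₂ (chkFun D) := by
  unfold chkFun
  refine Primrec.option_casesOn (Primrec.decode.comp Primrec.snd) (Primrec.const false) ?_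
  have part1 : Primrec fun z : (List (Fin n × Bool) × ℕ) ×
      (List (List (Fin n × Bool) × List (Fin n × Bool) × Bool) × ℕ) =>
      z.2.1.foldr (fun t acc => D t.2.1 z.2.2 && acc) true := by
    refine Primrec.list_foldr (f := fun z : (List (Fin n × Bool) × ℕ) ×
        (List (List (Fin n × Bool) × List (Fin n × Bool) × Bool) × ℕ) => z.2.1)
      (g := fun _ => true)
      (h := fun z (p : (List (Fin n × Bool) × List (Fin n × Bool) × Bool) × Bool) => D p.1.2.1 z.2.2 && p.2)
      (Primrec.fst.comp Primrec.snd) (Primrec.const true) ?_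
    exact (Primrec.and.comp
      (hDP.comp (Primrec.fst.comp (Primrec.snd.comp (Primrec.fst.comp Primrec.snd)))
        (Primrec.snd.comp (Primrec.snd.comp Primrec.fst)))
      (Primrec.snd.comp Primrec.snd)).to₂
  have part2 : Primrec fun z : (List (Fin n × Bool) × ℕ) ×
      (List (List (Fin n × Bool) × List (Fin n × Bool) × Bool) × ℕ) =>
      decide (FreeGroup.reduce (z.2.1.map wordOf).flatten = FreeGroup.reduce z.1.1) :=
    (Primrec.eq (α := List (Fin n × Bool))).comp
      (primrec_reduce.comp (Primrec.list_flatten.comp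
        (Primrec.list_map (Primrec.fst.comp Primrec.snd)
          (primrec_wordOf.comp Primrec.snd).to₂)))
      (primrec_reduce.comp (Primrec.fst.comp Primrec.fst)) |>.decide
  exact (Primrec.and.comp part1 part2).to₂

theorem foldr_all_iff {n : ℕ} (D : List (Fin n × Bool) → ℕ → Bool) (k : ℕ) :
    ∀ L : List (List (Fin n × Bool) × List (Fin n × Bool) × Bool),
      (L.foldr (fun t acc => D t.2.1 k && acc) true = true) ↔ ∀ t ∈ L, D t.2.1 k = true := by
  intro L
  induction L with
  | nil => simp
  | cons a L ih => simp [ih]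

/-- The "yes" part of the word problem in a recursively presented group
`⟨Fin n; R⟩` is recursively enumerable. -/
theorem word_problem_yes_part_re (n : ℕ) (R : Set (FreeGroup (Fin n)))
    (hR : REPred (fun l : List (Fin n × Bool) => FreeGroup.mk l ∈ R)) :
    REPred (fun l : List (Fin n × Bool) =>
      FreeGroup.mk l ∈ Subgroup.normalClosure R) := by
  obtain ⟨D, hDP, hmono, hiff⟩ := exists_of_rePred hR
  refine rePred_of_exists (D := chkFun D) (primrec_chkFun hDP).to_comp fun l => ?_
  constructor
  · intro hx
    obtain ⟨L, hL, hprod⟩ := mem_normalClosure_iff.1 hx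
    -- find a uniform bound k
    have huni : ∀ L' : List (List (Fin n × Bool) × List (Fin n × Bool) × Bool),
        (∀ t ∈ L', FreeGroup.mk t.2.1 ∈ R) → ∃ k, ∀ t ∈ L', D t.2.1 k = true := by
      intro L'
      induction L' with
      | nil => exact fun _ => ⟨0, by simp⟩
      | cons a L' ih =>
        intro hmem
        obtain ⟨k₁, hk₁⟩ := (hiff a.2.1).1 (hmem a (by simp))
        obtain ⟨k₂, hk₂⟩ := ih fun t ht => hmem t (List.mem_cons_of_mem _ ht)
        refine ⟨max k₁ k₂, fun t ht => ?_⟩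
        rcases List.mem_cons.1 ht with rfl | ht
        · exact hmono _ _ _ (le_max_left _ _) hk₁
        · exact hmono _ _ _ (le_max_right _ _) (hk₂ t ht)
    obtain ⟨k, hk⟩ := huni L hL
    refine ⟨Encodable.encode ((L, k) :
      List (List (Fin n × Bool) × List (Fin n × Bool) × Bool) × ℕ), ?_⟩
    unfold chkFun
    rw [Encodable.encodek]
    simp only [Bool.and_eq_true, decide_eq_true_eq]
    refine ⟨(foldr_all_iff D k L).2 hk, ?_⟩
    rw [← mk_eq_mk_iff, mk_flatten, List.map_map]
    rw [hprod]
    congr 1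
    exact List.map_congr_left fun t _ => (elemOf_eq_mk t).symm
  · rintro ⟨m, hm⟩
    unfold chkFun at hm
    rcases hdec : Encodable.decode
        (α := List (List (Fin n × Bool) × List (Fin n × Bool) × Bool) × ℕ) m with _ | q
    · rw [hdec] at hm; exact absurd hm (by simp)
    rw [hdec] at hm
    simp only [Bool.and_eq_true, decide_eq_true_eq] at hm
    obtain ⟨hfold, heq⟩ := hm
    refine mem_normalClosure_iff.2 ⟨q.1, ?_, ?_⟩
    · intro t ht
      exact (hiff t.2.1).2 ⟨q.2, (foldr_all_iff D q.2 q.1).1 hfold t ht⟩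
    · have : FreeGroup.mk ((q.1.map wordOf).flatten) = FreeGroup.mk l :=
        mk_eq_mk_iff.2 heq
      rw [← this, mk_flatten, List.map_map]
      congr 1
      exact List.map_congr_left fun t _ => (elemOf_eq_mk t).symm
end

section
/- Let n : ℕ and let R ⊆ FreeGroup (Fin n) be a set of relators such that the presentation ⟨Fin n; R⟩ is recursively presented, i.e., REPred (fun l : List (Fin n × Bool) => FreeGroup.mk l ∈ R). Then the 'yes' part of the conjugacy problem for the presented group is recursively enumerable: REPred (fun p : List (Fin n × Bool) × List (Fin n × Bool) => ∃ g : FreeGroup (Fin n), g⁻¹ * FreeGroup.mk p.1 * g * (FreeGroup.mk p.2)⁻¹ ∈ Subgroup.normalClosure R). (Two words w₁, w₂ represent conjugate elements of the presented group exactly when such a conjugator g exists.) -/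
set_option maxHeartbeats 1000000

open Nat.Partrec (Code)
open Nat.Partrec.Code

namespace ConjREAux

lemma re_of_sigma1 {α} [Primcodable α] {p : α → Prop} {f : α → ℕ → Bool}
    (hf : Computable₂ f) (H : ∀ a, p a ↔ ∃ k, f a k = true) : REPred p := by
  have h1 : Partrec fun a => Nat.rfind fun k => Part.some (f a k) :=
    Partrec.rfind ((hf.partrec₂).comp Computable.fst.partrec Computable.snd.partrec).to₂
  refine h1.dom_re.of_eq fun a => ?_
  rw [Nat.rfind_dom (p := fun k => Part.some (f a k))]
  constructor
  · rintro ⟨k, hk, -⟩; exact (H a).2 ⟨k, by simpa using hk⟩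
  · intro hp
    obtain ⟨k, hk⟩ := (H a).1 hp
    exact ⟨k, by simpa using hk, fun {_} _ => trivial⟩

lemma sigma1_of_re {α} [Primcodable α] {p : α → Prop} (h : REPred p) :
    ∃ f : α → ℕ → Bool, Primrec₂ f ∧ ∀ a, p a ↔ ∃ k, f a k = true := by
  obtain ⟨c, hc⟩ := exists_code.1 h
  refine ⟨fun a k => (evaln k c (Encodable.encode a)).isSome, ?_, ?_⟩
  · exact Primrec.option_isSome.comp <| primrec_evaln.comp <|
      (Primrec₂.pair.comp Primrec.snd (Primrec.const c)).pair
        (Primrec.encode.comp Primrec.fst)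
  · intro a
    have : p a ↔ (eval c (Encodable.encode a)).Dom := by
      rw [hc]; simp [Part.dom_iff_mem, Encodable.encodek]
    rw [this, Part.dom_iff_mem]
    constructor
    · rintro ⟨x, hx⟩
      obtain ⟨k, hk⟩ := evaln_complete.1 hx
      exact ⟨k, Option.isSome_iff_exists.2 ⟨x, hk⟩⟩
    · rintro ⟨k, hk⟩
      obtain ⟨x, hx⟩ := Option.isSome_iff_exists.1 hk
      exact ⟨x, evaln_complete.2 ⟨k, hx⟩⟩

lemma primrec_list_all {α β} [Primcodable α] [Primcodable β] {f : α → List β}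
    {q : α → β → Bool} (hf : Primrec f) (hq : Primrec₂ q) :
    Primrec fun a => (f a).all (q a) := by
  have h : Primrec fun a => (f a).foldr (fun b r => q a b && r) true :=
    Primrec.list_foldr hf (Primrec.const true) <| Primrec.to₂ <|
      Primrec.and.comp (hq.comp Primrec.fst (Primrec.fst.comp Primrec.snd))
        (Primrec.snd.comp Primrec.snd)
  refine h.of_eq fun a => ?_
  induction f a with
  | nil => rfl
  | cons b l ih => simp [ih]

lemma primrec_list_any {α β} [Primcodable α] [Primcodable β] {f : α → List β}
    {q : α → β → Bool} (hf : Primrec f) (hq : Primrec₂ q) :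
    Primrec fun a => (f a).any (q a) := by
  have h : Primrec fun a => (f a).foldr (fun b r => q a b || r) false :=
    Primrec.list_foldr hf (Primrec.const false) <| Primrec.to₂ <|
      Primrec.or.comp (hq.comp Primrec.fst (Primrec.fst.comp Primrec.snd))
        (Primrec.snd.comp Primrec.snd)
  refine h.of_eq fun a => ?_
  induction f a with
  | nil => rfl
  | cons b l ih => simp [ih]

lemma exists_bound {β : Type*} {q : β → ℕ → Prop} (L : List β)
    (h : ∀ e ∈ L, ∃ j, q e j) : ∃ m, ∀ e ∈ L, ∃ j, j ≤ m ∧ q e j := by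
  induction L with
  | nil => exact ⟨0, by simp⟩
  | cons b L ih =>
    obtain ⟨m, hm⟩ := ih fun e he => h e (List.mem_cons_of_mem _ he)
    obtain ⟨j, hj⟩ := h b (List.mem_cons_self)
    refine ⟨max j m, fun e he => ?_⟩
    rcases List.mem_cons.1 he with rfl | he
    · exact ⟨j, le_max_left _ _, hj⟩
    · obtain ⟨j', hj1, hj2⟩ := hm e he
      exact ⟨j', hj1.trans (le_max_right _ _), hj2⟩

variable {n : ℕ}

abbrev W (n : ℕ) := List (Fin n × Bool)

def step (x : Fin n × Bool) (r : W n) : W n :=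
  List.casesOn r [x] fun y ys => if x = (y.1, !y.2) then ys else x :: y :: ys

def red (l : W n) : W n := l.foldr step []

lemma red_eq (l : W n) : red l = FreeGroup.reduce l := by
  induction l with
  | nil => rfl
  | cons x xs ih =>
    rw [red, List.foldr_cons, FreeGroup.reduce.cons, ← red, ih]
    cases h : FreeGroup.reduce xs with
    | nil => rfl
    | cons y ys =>
      simp only [step]
      by_cases hxy : x = (y.1, !y.2)
      · rw [if_pos hxy, if_pos (by rw [hxy]; exact ⟨rfl, rfl⟩)]
      · rw [if_neg hxy, if_neg (by rintro ⟨h1, h2⟩; exact hxy (Prod.ext h1 h2))]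

lemma mk_eq_mk_iff (a b : W n) : FreeGroup.mk a = FreeGroup.mk b ↔ red a = red b := by
  rw [red_eq, red_eq, ← FreeGroup.toWord_mk, ← FreeGroup.toWord_mk]
  constructor
  · intro h; rw [h]
  · intro h
    rw [← FreeGroup.mk_toWord (x := FreeGroup.mk a), h, FreeGroup.mk_toWord]

lemma primrec_step : Primrec₂ (step (n := n)) := by
  have : Primrec₂ fun (x : Fin n × Bool) (p : (Fin n × Bool) × W n) =>
      if x = (p.1.1, !p.1.2) then p.2 else x :: p.1 :: p.2 := by
    apply Primrec.ite
    · exact Primrec.eq.comp Primrec.fst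
        ((Primrec.fst.comp (Primrec.fst.comp Primrec.snd)).pair
          (Primrec.not.comp (Primrec.snd.comp (Primrec.fst.comp Primrec.snd))))
    · exact Primrec.snd.comp Primrec.snd
    · exact Primrec.list_cons.comp Primrec.fst
        (Primrec.list_cons.comp (Primrec.fst.comp Primrec.snd) (Primrec.snd.comp Primrec.snd))
  exact (Primrec.list_casesOn Primrec.snd
    (Primrec.list_cons.comp Primrec.fst (Primrec.const []))
    (this.comp (Primrec.fst.comp Primrec.fst) Primrec.snd).to₂).to₂

lemma primrec_red : Primrec (red (n := n)) :=
  Primrec.list_foldr Primrec.id (Primrec.const [])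
    (primrec_step.comp (Primrec.fst.comp Primrec.snd) (Primrec.snd.comp Primrec.snd)).to₂

lemma primrec_invRev : Primrec (FreeGroup.invRev (α := Fin n)) := by
  have : Primrec fun l : W n => (l.map fun x => (x.1, !x.2)).reverse :=
    Primrec.list_reverse.comp <| Primrec.list_map Primrec.id <|
      ((Primrec.fst.comp Primrec.snd).pair (Primrec.not.comp (Primrec.snd.comp Primrec.snd)))
  exact this.of_eq fun l => rfl

def factor (e : W n × W n × Bool) : FreeGroup (Fin n) :=
  (FreeGroup.mk e.1)⁻¹ * (cond e.2.2 (FreeGroup.mk e.2.1) (FreeGroup.mk e.2.1)⁻¹) *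
    FreeGroup.mk e.1

def prodOf (L : List (W n × W n × Bool)) : FreeGroup (Fin n) := (L.map factor).prod

def wordOf (e : W n × W n × Bool) : W n :=
  FreeGroup.invRev e.1 ++ (cond e.2.2 e.2.1 (FreeGroup.invRev e.2.1)) ++ e.1

def wordsOf (L : List (W n × W n × Bool)) : W n := (L.map wordOf).flatten

lemma primrec_wordOf : Primrec (wordOf (n := n)) :=
  Primrec.list_append.comp
    (Primrec.list_append.comp (primrec_invRev.comp Primrec.fst)
      (Primrec.cond (Primrec.snd.comp Primrec.snd) (Primrec.fst.comp Primrec.snd)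
        (primrec_invRev.comp (Primrec.fst.comp Primrec.snd))))
    Primrec.fst

lemma primrec_wordsOf : Primrec (wordsOf (n := n)) :=
  Primrec.list_flatten.comp <|
    Primrec.list_map Primrec.id (primrec_wordOf.comp Primrec.snd).to₂

lemma mk_wordOf (e : W n × W n × Bool) : FreeGroup.mk (wordOf e) = factor e := by
  obtain ⟨c, r, b⟩ := e
  cases b <;>
    simp [wordOf, factor, ← FreeGroup.mul_mk, FreeGroup.inv_mk, mul_assoc]

lemma mk_wordsOf (L : List (W n × W n × Bool)) :
    FreeGroup.mk (wordsOf L) = prodOf L := by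
  induction L with
  | nil => rfl
  | cons e L ih =>
    rw [wordsOf, List.map_cons, List.flatten_cons, ← FreeGroup.mul_mk, mk_wordOf,
      prodOf, List.map_cons, List.prod_cons]
    exact congrArg _ ih

lemma mem_normalClosure_iff {R : Set (FreeGroup (Fin n))} {x : FreeGroup (Fin n)} :
    x ∈ Subgroup.normalClosure R ↔
      ∃ L : List (W n × W n × Bool),
        (∀ e ∈ L, FreeGroup.mk e.2.1 ∈ R) ∧ x = prodOf L := by
  constructor
  · intro hx
    refine Subgroup.closure_induction (k := Group.conjugatesOfSet R)
      (p := fun y _ => ∃ L : List (W n × W n × Bool),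
        (∀ e ∈ L, FreeGroup.mk e.2.1 ∈ R) ∧ y = prodOf L) ?_ ?_ ?_ ?_ hx
    · intro y hy
      obtain ⟨a, haR, hconj⟩ := Group.mem_conjugatesOfSet_iff.1 hy
      obtain ⟨c, hc⟩ := isConj_iff.1 hconj
      refine ⟨[((c⁻¹).toWord, a.toWord, true)], ?_, ?_⟩
      · simpa [FreeGroup.mk_toWord] using haR
      · simp [prodOf, factor, FreeGroup.mk_toWord, ← hc]
        group
        rw [zpow_neg_one, ← FreeGroup.inv_mk, FreeGroup.mk_toWord]
    · exact ⟨[], by simp, rfl⟩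
    · rintro y z _ _ ⟨L₁, h₁, rfl⟩ ⟨L₂, h₂, rfl⟩
      refine ⟨L₁ ++ L₂, ?_, ?_⟩
      · intro e he; rcases List.mem_append.1 he with h | h
        exacts [h₁ e h, h₂ e h]
      · simp [prodOf]
    · rintro y _ ⟨L, hL, rfl⟩
      refine ⟨(L.map fun e => (e.1, e.2.1, !e.2.2)).reverse, ?_, ?_⟩
      · intro e he
        simp only [List.mem_reverse, List.mem_map] at he
        obtain ⟨e', he', rfl⟩ := he
        exact hL e' he'
      · rw [prodOf, prodOf, List.map_reverse, List.map_map, List.prod_inv_reverse,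
          List.map_map]
        refine congrArg _ (congrArg List.reverse (List.map_congr_left fun e _ => ?_))
        obtain ⟨c, r, b⟩ := e
        cases b <;> simp only [Function.comp, factor, cond_true, cond_false,
          Bool.not_true, Bool.not_false] <;> group
  · rintro ⟨L, hL, rfl⟩
    rw [← mk_wordsOf, mk_wordsOf]
    refine Subgroup.list_prod_mem _ ?_
    intro y hy
    simp only [List.mem_map] at hy
    obtain ⟨e, he, rfl⟩ := hy
    obtain ⟨c, r, b⟩ := e
    have hr : FreeGroup.mk r ∈ Subgroup.normalClosure R :=
      Subgroup.subset_normalClosure (hL _ he)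
    have : cond b (FreeGroup.mk r) (FreeGroup.mk r)⁻¹ ∈
        Subgroup.normalClosure R := by
      cases b
      · exact inv_mem hr
      · exact hr
    exact Subgroup.Normal.conj_mem' (Subgroup.normalClosure_normal) _ this (FreeGroup.mk c)

def bigword (p : W n × W n) (g : W n) : W n :=
  FreeGroup.invRev g ++ p.1 ++ g ++ FreeGroup.invRev p.2

lemma mk_bigword (p : W n × W n) (g : W n) :
    FreeGroup.mk (bigword p g) =
      (FreeGroup.mk g)⁻¹ * FreeGroup.mk p.1 * FreeGroup.mk g * (FreeGroup.mk p.2)⁻¹ := by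
  simp [bigword, ← FreeGroup.mul_mk, FreeGroup.inv_mk, mul_assoc]

def check (f : W n → ℕ → Bool) (p : W n × W n) (k : ℕ) : Bool :=
  Option.casesOn
    (Encodable.decode (α := W n × List (W n × W n × Bool)) k.unpair.1) false
    fun gl => (decide (red (bigword p gl.1) = red (wordsOf gl.2))) &&
      gl.2.all fun e => (List.range (k.unpair.2 + 1)).any fun j => f e.2.1 j

lemma primrec_check {f : W n → ℕ → Bool} (hf : Primrec₂ f) : Primrec₂ (check f) := by
  have ho : Primrec fun a : (W n × W n) × ℕ =>
      (Encodable.decode (α := W n × List (W n × W n × Bool)) a.2.unpair.1) :=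
    Primrec.decode.comp (Primrec.fst.comp (Primrec.unpair.comp Primrec.snd))
  have hbig : Primrec fun x : ((W n × W n) × ℕ) × (W n × List (W n × W n × Bool)) =>
      bigword x.1.1 x.2.1 :=
    Primrec.list_append.comp
      (Primrec.list_append.comp
        (Primrec.list_append.comp (primrec_invRev.comp (Primrec.fst.comp Primrec.snd))
          (Primrec.fst.comp (Primrec.fst.comp Primrec.fst)))
        (Primrec.fst.comp Primrec.snd))
      (primrec_invRev.comp (Primrec.snd.comp (Primrec.fst.comp Primrec.fst)))
  have h1 : Primrec fun x : ((W n × W n) × ℕ) × (W n × List (W n × W n × Bool)) =>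
      decide (red (bigword x.1.1 x.2.1) = red (wordsOf x.2.2)) :=
    Primrec.eq.comp (primrec_red.comp hbig)
      (primrec_red.comp (primrec_wordsOf.comp (Primrec.snd.comp Primrec.snd))) |>.decide
  have hj : Primrec fun z2 : ((((W n × W n) × ℕ) × (W n × List (W n × W n × Bool))) ×
      (W n × W n × Bool)) × ℕ => f z2.1.2.2.1 z2.2 :=
    hf.comp (Primrec.fst.comp (Primrec.snd.comp (Primrec.snd.comp Primrec.fst))) Primrec.snd
  have hq : Primrec fun z : (((W n × W n) × ℕ) × (W n × List (W n × W n × Bool))) ×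
      (W n × W n × Bool) =>
      (List.range (z.1.1.2.unpair.2 + 1)).any fun j => f z.2.2.1 j :=
    primrec_list_any
      (Primrec.list_range.comp (Primrec.succ.comp
        (Primrec.snd.comp (Primrec.unpair.comp
          (Primrec.snd.comp (Primrec.fst.comp Primrec.fst)))))) hj.to₂
  have h2 : Primrec fun x : ((W n × W n) × ℕ) × (W n × List (W n × W n × Bool)) =>
      x.2.2.all fun e => (List.range (x.1.2.unpair.2 + 1)).any fun j => f e.2.1 j :=
    primrec_list_all (Primrec.snd.comp Primrec.snd) hq.to₂
  exact (Primrec.option_casesOn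
    (o := fun a : (W n × W n) × ℕ =>
      Encodable.decode (α := W n × List (W n × W n × Bool)) a.2.unpair.1)
    (f := fun _ => false)
    (g := fun a gl => (decide (red (bigword a.1 gl.1) = red (wordsOf gl.2))) &&
      gl.2.all fun e => (List.range (a.2.unpair.2 + 1)).any fun j => f e.2.1 j)
    ho (Primrec.const false)
    (Primrec.and.comp h1 h2).to₂).to₂

lemma check_iff {R : Set (FreeGroup (Fin n))} {f : W n → ℕ → Bool}
    (hfR : ∀ w : W n, FreeGroup.mk w ∈ R ↔ ∃ k, f w k = true) (p : W n × W n) :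
    (∃ g : FreeGroup (Fin n),
        g⁻¹ * FreeGroup.mk p.1 * g * (FreeGroup.mk p.2)⁻¹ ∈ Subgroup.normalClosure R) ↔
      ∃ k, check f p k = true := by
  constructor
  · rintro ⟨g, hg⟩
    have hmk : FreeGroup.mk (bigword p g.toWord) =
        g⁻¹ * FreeGroup.mk p.1 * g * (FreeGroup.mk p.2)⁻¹ := by
      rw [mk_bigword, FreeGroup.mk_toWord]
    rw [← hmk] at hg
    obtain ⟨L, hL, hprod⟩ := mem_normalClosure_iff.1 hg
    have hred : red (bigword p g.toWord) = red (wordsOf L) :=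
      (mk_eq_mk_iff _ _).1 (by rw [hprod, mk_wordsOf])
    obtain ⟨m, hm⟩ := exists_bound L fun e he => (hfR e.2.1).1 (hL e he)
    refine ⟨Nat.pair (Encodable.encode ((g.toWord : W n), L)) m, ?_⟩
    simp only [check, Nat.unpair_pair, Encodable.encodek]
    rw [Bool.and_eq_true, decide_eq_true_eq, List.all_eq_true]
    refine ⟨hred, fun e he => ?_⟩
    obtain ⟨j, hj1, hj2⟩ := hm e he
    rw [List.any_eq_true]
    exact ⟨j, List.mem_range.2 (Nat.lt_succ_of_le hj1), hj2⟩
  · rintro ⟨k, hk⟩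
    rw [check] at hk
    cases hd : (Encodable.decode (α := W n × List (W n × W n × Bool)) k.unpair.1) with
    | none => rw [hd] at hk; exact absurd hk (by simp)
    | some gl =>
      rw [hd] at hk
      simp only [Bool.and_eq_true, decide_eq_true_eq, List.all_eq_true] at hk
      obtain ⟨hred, hall⟩ := hk
      refine ⟨FreeGroup.mk gl.1, ?_⟩
      have hmk : FreeGroup.mk (bigword p gl.1) =
          (FreeGroup.mk gl.1)⁻¹ * FreeGroup.mk p.1 * FreeGroup.mk gl.1 *
            (FreeGroup.mk p.2)⁻¹ := mk_bigword p gl.1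
      rw [← hmk]
      refine mem_normalClosure_iff.2 ⟨gl.2, fun e he => ?_, ?_⟩
      · refine (hfR e.2.1).2 ?_
        obtain ⟨j, -, hj⟩ := List.any_eq_true.1 (hall e he)
        exact ⟨j, hj⟩
      · rw [← mk_wordsOf]
        exact (mk_eq_mk_iff _ _).2 hred

end ConjREAux

open ConjREAux in
/-- The "yes" part of the conjugacy problem in a recursively presented group
`⟨Fin n; R⟩` is recursively enumerable. -/
theorem conjugacy_problem_yes_part_re (n : ℕ) (R : Set (FreeGroup (Fin n)))
    (hR : REPred (fun l : List (Fin n × Bool) => FreeGroup.mk l ∈ R)) :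
    REPred (fun p : List (Fin n × Bool) × List (Fin n × Bool) =>
      ∃ g : FreeGroup (Fin n),
        g⁻¹ * FreeGroup.mk p.1 * g * (FreeGroup.mk p.2)⁻¹ ∈
          Subgroup.normalClosure R) := by
  obtain ⟨f, hf, hfR⟩ := sigma1_of_re hR
  exact re_of_sigma1 (primrec_check hf).to_comp fun p => check_iff hfR p
end

section
/- Tietze transformation (T1)/(T2), introducing or canceling a generator, preserves the isomorphism type of a presented group: let α be a type, rels ⊆ FreeGroup α a set of relators, and s ∈ FreeGroup α. Let ι := FreeGroup.map (Option.some) : FreeGroup α →* FreeGroup (Option α) be the embedding induced by the inclusion of generators, and let y := FreeGroup.of (none : Option α) be the new generator. Then PresentedGroup rels is isomorphic to PresentedGroup (insert (y * (ι s)⁻¹) (ι '' rels)), i.e., Nonempty (PresentedGroup rels ≃* PresentedGroup (insert (FreeGroup.of none * (FreeGroup.map Option.some s)⁻¹) (⇑(FreeGroup.map Option.some) '' rels))). -/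
namespace TietzeAux

variable {α : Type} (rels : Set (FreeGroup α)) (s : FreeGroup α)

theorem mk_eq_one {rels : Set (FreeGroup α)} {r : FreeGroup α} (h : r ∈ rels) :
    PresentedGroup.mk rels r = 1 :=
  (QuotientGroup.eq_one_iff r).2 (Subgroup.subset_normalClosure h)

theorem lift_of_eq_mk {rels : Set (FreeGroup α)} :
    FreeGroup.lift (fun x => (PresentedGroup.of x : PresentedGroup rels))
      = PresentedGroup.mk rels :=
  MonoidHom.ext fun w => (FreeGroup.lift_unique (PresentedGroup.mk rels) (fun _ => rfl) (x := w)).symm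

theorem lift_comp_map {β : Type} {G : Type*} [Group G] (f : β → G) (g : α → β)
    (w : FreeGroup α) :
    FreeGroup.lift f (FreeGroup.map g w) = FreeGroup.lift (f ∘ g) w := by
  exact FreeGroup.lift_unique ((FreeGroup.lift f).comp (FreeGroup.map g)) (by simp) (x := w)

section

variable (rels' : Set (FreeGroup (Option α)))
  (hs : FreeGroup.of (none : Option α) * (FreeGroup.map Option.some s)⁻¹ ∈ rels')
  (himg : ∀ r ∈ rels, FreeGroup.map (Option.some : α → Option α) r ∈ rels')
  (hmem : ∀ r ∈ rels', r = FreeGroup.of (none : Option α) * (FreeGroup.map Option.some s)⁻¹ ∨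
    ∃ t ∈ rels, r = FreeGroup.map Option.some t)

include hs himg hmem in
theorem main : Nonempty (PresentedGroup rels ≃* PresentedGroup rels') := by
  -- forward map
  have hf : ∀ r ∈ rels, FreeGroup.lift
      (fun x => (PresentedGroup.of (Option.some x) : PresentedGroup rels')) r = 1 := by
    intro r hr
    have : (fun x => (PresentedGroup.of (Option.some x) : PresentedGroup rels'))
        = (fun y => (PresentedGroup.of y : PresentedGroup rels')) ∘ Option.some := rfl
    rw [this, ← lift_comp_map, lift_of_eq_mk]
    exact mk_eq_one (himg r hr)
  let f : PresentedGroup rels →* PresentedGroup rels' := PresentedGroup.toGroup hf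
  -- backward map
  let gmap : Option α → PresentedGroup rels := fun o => o.elim (PresentedGroup.mk rels s)
    (fun x => PresentedGroup.of x)
  have key : FreeGroup.lift gmap (FreeGroup.map Option.some s) = PresentedGroup.mk rels s := by
    rw [lift_comp_map]
    have : gmap ∘ Option.some = fun x => (PresentedGroup.of x : PresentedGroup rels) := rfl
    rw [this, lift_of_eq_mk]
  have hg : ∀ r ∈ rels', FreeGroup.lift gmap r = 1 := by
    intro r hr
    rcases hmem r hr with h | ⟨t, ht, h⟩
    · subst h
      simp only [map_mul, map_inv, FreeGroup.lift_apply_of, key]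
      simp [gmap]
    · subst h
      rw [lift_comp_map]
      have : gmap ∘ Option.some = fun x => (PresentedGroup.of x : PresentedGroup rels) := rfl
      rw [this, lift_of_eq_mk]
      exact mk_eq_one ht
  let g : PresentedGroup rels' →* PresentedGroup rels := PresentedGroup.toGroup hg
  -- mutually inverse
  have hgf : g.comp f = MonoidHom.id _ := by
    apply PresentedGroup.ext
    intro x
    simp [f, g, PresentedGroup.toGroup.of, gmap]
  have hmk : f.comp (PresentedGroup.mk rels) = (PresentedGroup.mk rels').comp (FreeGroup.map Option.some) := by
    apply FreeGroup.ext_hom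
    intro a
    simp [f, PresentedGroup.toGroup.of]
    rfl
  have hfg : f.comp g = MonoidHom.id _ := by
    apply PresentedGroup.ext
    intro x
    match x with
    | Option.some a => simp [f, g, PresentedGroup.toGroup.of, gmap]
    | Option.none =>
        have h1 : (f.comp g) (PresentedGroup.of Option.none)
            = f (PresentedGroup.mk rels s) := by
          simp [f, g, PresentedGroup.toGroup.of, gmap]
        rw [h1]
        have h2 : f (PresentedGroup.mk rels s)
            = PresentedGroup.mk rels' (FreeGroup.map Option.some s) :=
          DFunLike.congr_fun hmk s
        rw [h2]
        have h3 : PresentedGroup.mk rels'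
            (FreeGroup.of (none : Option α) * (FreeGroup.map Option.some s)⁻¹) = 1 :=
          mk_eq_one hs
        have : PresentedGroup.mk rels' (FreeGroup.of (none : Option α))
            * (PresentedGroup.mk rels' (FreeGroup.map Option.some s))⁻¹ = 1 := by
          simpa using h3
        have h4 := mul_inv_eq_one.mp this
        simp only [MonoidHom.id_apply]
        rw [← h4]
        rfl
  exact ⟨MonoidHom.toMulEquiv f g hgf hfg⟩

end

end TietzeAux

/-- Tietze transformations (T1)/(T2): introducing (or canceling) a generator `y`
together with a relator `y·s⁻¹` preserves the isomorphism type of the presented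
group. -/
theorem tietze_T1_T2 (α : Type) (rels : Set (FreeGroup α)) (s : FreeGroup α) :
    Nonempty (PresentedGroup rels ≃*
      PresentedGroup
        (insert (FreeGroup.of (none : Option α) * (FreeGroup.map Option.some s)⁻¹)
          (⇑(FreeGroup.map (Option.some : α → Option α)) '' rels))) :=
  TietzeAux.main rels s _ (Set.mem_insert _ _)
    (fun r hr => Set.mem_insert_iff.mpr (Or.inr ⟨r, hr, rfl⟩))
    (fun r hr => by
      rcases Set.mem_insert_iff.mp hr with h | ⟨t, ht, h⟩
      · exact Or.inl h
      · exact Or.inr ⟨t, ht, h.symm⟩)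
end

section
/- All homomorphisms between two finitely presented groups are recursively enumerable: let n₁, n₂ : ℕ and R₁ : Finset (FreeGroup (Fin n₁)), R₂ : Finset (FreeGroup (Fin n₂)) be finite relator sets. Then the set of n₁-tuples of words over the second alphabet that induce a homomorphism from ⟨Fin n₁; R₁⟩ to ⟨Fin n₂; R₂⟩ is recursively enumerable: REPred (fun v : List.Vector (List (Fin n₂ × Bool)) n₁ => ∀ r ∈ R₁, FreeGroup.lift (fun i : Fin n₁ => FreeGroup.mk (v.get i)) r ∈ Subgroup.normalClosure (↑R₂)). (A tuple of words (v₁, …, v_{n₁}) induces a homomorphism on the presented groups exactly when the substitution xᵢ ↦ vᵢ sends every relator of R₁ into the normal closure of R₂.) -/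
open List (Vector)

set_option linter.unusedSectionVars false

namespace HomRE
open FreeGroup

variable {β : Type*} [DecidableEq β] [Primcodable β] {n : ℕ}

/-! ### Word-level machinery -/

def redStep (x : β × Bool) (l : List (β × Bool)) : List (β × Bool) :=
  List.casesOn l [x] fun hd tl => if x.1 = hd.1 ∧ x.2 = !hd.2 then tl else x :: hd :: tl

def red (l : List (β × Bool)) : List (β × Bool) := l.foldr redStep []

lemma red_eq_reduce (l : List (β × Bool)) : red l = FreeGroup.reduce l := by
  induction l with
  | nil => rfl
  | cons x t ih =>
    rw [FreeGroup.reduce.cons]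
    show redStep x (red t) = _
    rw [ih]; rfl

lemma mk_eq_iff {l₁ l₂ : List (β × Bool)} :
    FreeGroup.mk l₁ = FreeGroup.mk l₂ ↔ red l₁ = red l₂ := by
  rw [red_eq_reduce, red_eq_reduce]
  constructor
  · intro h
    have := congrArg FreeGroup.toWord h
    rwa [toWord_mk, toWord_mk] at this
  · exact FreeGroup.reduce.exact

def subWord (v : List.Vector (List (β × Bool)) n) (w : List (Fin n × Bool)) : List (β × Bool) :=
  (w.map fun p => cond p.2 (v.get p.1) (FreeGroup.invRev (v.get p.1))).flatten

lemma mk_subWord (v : List.Vector (List (β × Bool)) n) (w : List (Fin n × Bool)) :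
    FreeGroup.mk (subWord v w) =
      FreeGroup.lift (fun i => FreeGroup.mk (v.get i)) (FreeGroup.mk w) := by
  induction w with
  | nil => simp [subWord]; rfl
  | cons p t ih =>
    have : subWord v (p :: t) =
        (cond p.2 (v.get p.1) (FreeGroup.invRev (v.get p.1))) ++ subWord v t := by
      simp [subWord]
    rw [this, ← FreeGroup.mul_mk, ih, FreeGroup.lift_mk, FreeGroup.lift_mk, List.map_cons,
      List.prod_cons]
    congr 1
    cases p.2 <;> simp [FreeGroup.inv_mk]

def conjWord (rels : List (List (β × Bool))) (e : List (β × Bool) × ℕ × Bool) :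
    List (β × Bool) :=
  e.1 ++ (cond e.2.2 (rels.getD e.2.1 []) (FreeGroup.invRev (rels.getD e.2.1 []))) ++
    FreeGroup.invRev e.1

def prodWord (rels : List (List (β × Bool))) (cert : List (List (β × Bool) × ℕ × Bool)) :
    List (β × Bool) :=
  (cert.map (conjWord rels)).flatten

lemma mk_invRev (L : List (β × Bool)) :
    FreeGroup.mk (FreeGroup.invRev L) = (FreeGroup.mk L)⁻¹ := (FreeGroup.inv_mk).symm

lemma mk_conjWord (rels) (e : List (β × Bool) × ℕ × Bool) :
    FreeGroup.mk (conjWord rels e) =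
      FreeGroup.mk e.1 * (cond e.2.2 (FreeGroup.mk (rels.getD e.2.1 []))
        (FreeGroup.mk (rels.getD e.2.1 []))⁻¹) * (FreeGroup.mk e.1)⁻¹ := by
  rw [conjWord, ← FreeGroup.mul_mk, ← FreeGroup.mul_mk, FreeGroup.inv_mk]
  cases e.2.2 <;> simp [FreeGroup.inv_mk]

lemma mk_prodWord (rels) (cert : List (List (β × Bool) × ℕ × Bool)) :
    FreeGroup.mk (prodWord rels cert) =
      (cert.map fun e => FreeGroup.mk (conjWord rels e)).prod := by
  induction cert with
  | nil => rfl
  | cons e t ih =>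
    simp only [prodWord, List.map_cons, List.flatten_cons, List.prod_cons, ← FreeGroup.mul_mk]
    rw [← ih]; rfl

/-! ### Certificates for membership in the normal closure -/

lemma getD_rels_mem (R : Finset (FreeGroup β)) (k : ℕ) :
    FreeGroup.mk ((R.toList.map FreeGroup.toWord).getD k []) ∈
      Subgroup.normalClosure (R : Set (FreeGroup β)) := by
  set rels := R.toList.map FreeGroup.toWord with hr
  by_cases hk : k < rels.length
  · rw [List.getD_eq_getElem _ _ hk]
    have hk' : k < R.toList.length := by simpa [hr] using hk
    have : rels[k] = FreeGroup.toWord (R.toList[k]) := by simp [hr]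
    rw [this, FreeGroup.mk_toWord]
    exact Subgroup.subset_normalClosure
      (Finset.mem_coe.2 (Finset.mem_toList.1 (List.getElem_mem hk')))
  · rw [List.getD_eq_default _ _ (le_of_not_gt hk)]
    exact (Subgroup.normalClosure _).one_mem

lemma mk_prodWord_mem (R : Finset (FreeGroup β)) (cert : List (List (β × Bool) × ℕ × Bool)) :
    FreeGroup.mk (prodWord (R.toList.map FreeGroup.toWord) cert) ∈
      Subgroup.normalClosure (R : Set (FreeGroup β)) := by
  rw [mk_prodWord]
  apply list_prod_mem
  intro x hx
  simp only [List.mem_map] at hx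
  obtain ⟨e, -, rfl⟩ := hx
  rw [mk_conjWord]
  have hbase : (cond e.2.2 (FreeGroup.mk ((R.toList.map FreeGroup.toWord).getD e.2.1 []))
      (FreeGroup.mk ((R.toList.map FreeGroup.toWord).getD e.2.1 []))⁻¹) ∈
        Subgroup.normalClosure (R : Set (FreeGroup β)) := by
    cases e.2.2
    · exact (Subgroup.normalClosure _).inv_mem (getD_rels_mem R e.2.1)
    · exact getD_rels_mem R e.2.1
  exact Subgroup.normalClosure_normal.conj_mem _ hbase _

lemma exists_cert {R : Finset (FreeGroup β)} {x : FreeGroup β}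
    (hx : x ∈ Subgroup.normalClosure (R : Set (FreeGroup β))) :
    ∃ cert, FreeGroup.mk (prodWord (R.toList.map FreeGroup.toWord) cert) = x := by
  set rels := R.toList.map FreeGroup.toWord with hr
  refine Subgroup.closure_induction ?_ ?_ ?_ ?_ hx
  · intro y hy
    rw [Group.mem_conjugatesOfSet_iff] at hy
    obtain ⟨a, ha, hc⟩ := hy
    obtain ⟨c, rfl⟩ := isConj_iff.1 hc
    have haL : a ∈ R.toList := Finset.mem_toList.2 ha
    set k := R.toList.idxOf a with hk
    have hkl : k < R.toList.length := List.idxOf_lt_length_iff.2 haL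
    have hget : rels.getD k [] = FreeGroup.toWord a := by
      rw [hr, List.getD_eq_getElem _ _ (by simpa using hkl)]
      simp [hk, List.getElem_idxOf]
    refine ⟨[(FreeGroup.toWord c, k, true)], ?_⟩
    rw [mk_prodWord]
    simp only [mk_prodWord, List.map_cons, List.map_nil, List.prod_cons, List.prod_nil, mul_one]
    rw [mk_conjWord]
    simp only [cond]
    rw [hget, FreeGroup.mk_toWord, FreeGroup.mk_toWord]
  · exact ⟨[], rfl⟩
  · rintro x y - - ⟨c₁, rfl⟩ ⟨c₂, rfl⟩
    refine ⟨c₁ ++ c₂, ?_⟩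
    rw [mk_prodWord, mk_prodWord, mk_prodWord, List.map_append, List.prod_append]
  · rintro x - ⟨c, rfl⟩
    refine ⟨c.reverse.map fun e => (e.1, e.2.1, !e.2.2), ?_⟩
    rw [mk_prodWord, mk_prodWord]
    induction c with
    | nil => simp
    | cons e t ih =>
      simp only [List.reverse_cons, List.map_append, List.map_cons, List.prod_append,
        List.prod_cons, List.map_nil, List.prod_nil, mul_one, mul_inv_rev, ih]
      congr 1
      obtain ⟨c, k, b⟩ := e
      rw [show ((c,k,b).1, (c,k,b).2.1, !(c,k,b).2.2) = (c,k,!b) from rfl,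
        mk_conjWord, mk_conjWord]
      cases b <;> simp only [Bool.not_false, Bool.not_true, cond] <;> group

lemma mem_iff (R : Finset (FreeGroup β)) (w : List (β × Bool)) :
    FreeGroup.mk w ∈ Subgroup.normalClosure (R : Set (FreeGroup β)) ↔
      ∃ cert, red (prodWord (R.toList.map FreeGroup.toWord) cert) = red w := by
  constructor
  · intro h
    obtain ⟨cert, hc⟩ := exists_cert h
    exact ⟨cert, mk_eq_iff.1 hc⟩
  · rintro ⟨cert, hc⟩
    have := mk_prodWord_mem R cert
    rwa [mk_eq_iff.2 hc] at this

/-! ### Computability -/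

lemma primrec_invRev : Primrec (FreeGroup.invRev : List (β × Bool) → List (β × Bool)) :=
  (Primrec.list_reverse.comp (Primrec.list_map .id
    ((Primrec.pair (Primrec.fst.comp Primrec.snd)
      (Primrec.not.comp (Primrec.snd.comp Primrec.snd))).to₂))).of_eq
    fun l => by simp [FreeGroup.invRev]

lemma primrec_red : Primrec (red : List (β × Bool) → List (β × Bool)) := by
  have hcond : PrimrecPred (fun y : (List (β × Bool) × ((β × Bool) × List (β × Bool))) ×
      ((β × Bool) × List (β × Bool)) => y.1.2.1.1 = y.2.1.1 ∧ y.1.2.1.2 = !y.2.1.2) := by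
    apply PrimrecPred.and
    · exact Primrec.eq.comp (Primrec.fst.comp <| Primrec.fst.comp <| Primrec.snd.comp Primrec.fst)
        (Primrec.fst.comp <| Primrec.fst.comp Primrec.snd)
    · exact Primrec.eq.comp (Primrec.snd.comp <| Primrec.fst.comp <| Primrec.snd.comp Primrec.fst)
        (Primrec.not.comp <| Primrec.snd.comp <| Primrec.fst.comp Primrec.snd)
  have hstep : Primrec₂ (fun (_ : List (β × Bool)) (p : (β × Bool) × List (β × Bool)) =>
      redStep p.1 p.2) := by
    have := Primrec.list_casesOn
      (f := fun x : List (β × Bool) × ((β × Bool) × List (β × Bool)) => x.2.2)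
      (g := fun x => [x.2.1])
      (h := fun x (q : (β × Bool) × List (β × Bool)) =>
        if x.2.1.1 = q.1.1 ∧ x.2.1.2 = !q.1.2 then q.2 else x.2.1 :: q.1 :: q.2)
      (Primrec.snd.comp Primrec.snd)
      (Primrec.list_cons.comp (Primrec.fst.comp Primrec.snd) (Primrec.const []))
      (Primrec.ite hcond (Primrec.snd.comp Primrec.snd)
        (Primrec.list_cons.comp (Primrec.fst.comp <| Primrec.snd.comp Primrec.fst)
          (Primrec.list_cons.comp (Primrec.fst.comp Primrec.snd)
            (Primrec.snd.comp Primrec.snd))))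
    exact this.of_eq fun x => by rcases x with ⟨a, p, l⟩; cases l <;> rfl
  exact (Primrec.list_foldr .id (Primrec.const []) hstep).of_eq fun l => rfl

lemma primrec_subWord :
    Primrec₂ (subWord : List.Vector (List (β × Bool)) n → List (Fin n × Bool) → List (β × Bool)) := by
  have hget : Primrec (fun y : (List.Vector (List (β × Bool)) n × List (Fin n × Bool)) ×
      (Fin n × Bool) => y.1.1.get y.2.1) :=
    Primrec.vector_get.comp (Primrec.fst.comp Primrec.fst) (Primrec.fst.comp Primrec.snd)
  exact Primrec.list_flatten.comp (Primrec.list_map Primrec.snd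
    ((Primrec.cond (Primrec.snd.comp Primrec.snd) hget (primrec_invRev.comp hget)).to₂))
    |>.to₂

lemma primrec_prodWord (rels : List (List (β × Bool))) :
    Primrec (prodWord rels) := by
  have hw : Primrec (fun e : List (β × Bool) × ℕ × Bool => rels.getD e.2.1 []) :=
    (Primrec.list_getD []).comp (Primrec.const rels) (Primrec.fst.comp Primrec.snd)
  have hconj : Primrec (conjWord rels) :=
    Primrec.list_append.comp
      (Primrec.list_append.comp Primrec.fst
        (Primrec.cond (Primrec.snd.comp Primrec.snd) hw (primrec_invRev.comp hw)))
      (primrec_invRev.comp Primrec.fst)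
  exact Primrec.list_flatten.comp (Primrec.list_map .id (hconj.comp Primrec.snd).to₂)

def checkAll (ws : List (List (Fin n × Bool))) (rels : List (List (β × Bool)))
    (x : List.Vector (List (β × Bool)) n × List (List (List (β × Bool) × ℕ × Bool))) : Bool :=
  (List.range ws.length).foldr
    (fun k acc =>
      decide (red (prodWord rels (x.2.getD k [])) = red (subWord x.1 (ws.getD k []))) && acc) true

lemma primrec_checkAll (ws : List (List (Fin n × Bool))) (rels : List (List (β × Bool))) :
    Primrec (checkAll ws rels) := by
  have hdec : Primrec (fun y : (List.Vector (List (β × Bool)) n ×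
      List (List (List (β × Bool) × ℕ × Bool))) × (ℕ × Bool) =>
      decide (red (prodWord rels (y.1.2.getD y.2.1 [])) =
        red (subWord y.1.1 (ws.getD y.2.1 [])))) := by
    refine PrimrecPred.decide ?_
    apply Primrec.eq.comp
    · exact primrec_red.comp ((primrec_prodWord rels).comp
        ((Primrec.list_getD []).comp (Primrec.snd.comp Primrec.fst)
          (Primrec.fst.comp Primrec.snd)))
    · exact primrec_red.comp (primrec_subWord.comp (Primrec.fst.comp Primrec.fst)
        ((Primrec.list_getD []).comp (Primrec.const ws) (Primrec.fst.comp Primrec.snd)))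
  exact (Primrec.list_foldr (Primrec.const (List.range ws.length)) (Primrec.const true)
    (Primrec.and.comp hdec (Primrec.snd.comp Primrec.snd)).to₂).of_eq fun x => rfl

lemma foldr_and {α : Type*} (l : List α) (q : α → Bool) :
    (l.foldr (fun k acc => q k && acc) true = true) ↔ ∀ k ∈ l, q k = true := by
  induction l with
  | nil => simp
  | cons a t ih => simp [ih]

lemma checkAll_iff (ws : List (List (Fin n × Bool))) (rels : List (List (β × Bool)))
    (v : List.Vector (List (β × Bool)) n) (certs : List (List (List (β × Bool) × ℕ × Bool))) :
    checkAll ws rels (v, certs) = true ↔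
      ∀ k ∈ List.range ws.length,
        red (prodWord rels (certs.getD k [])) = red (subWord v (ws.getD k [])) := by
  rw [checkAll, foldr_and]
  simp

/-! ### RE from a boolean witness predicate -/

lemma re_of_bool {α γ : Type*} [Primcodable α] [Primcodable γ] {f : α → γ → Bool}
    (hf : Computable₂ f) : REPred fun a => ∃ c, f a c = true := by
  classical
  set g : α → ℕ → Bool := fun a n => ((Encodable.decode (α := γ) n).map (f a)).getD false with hg
  have hgc : Computable₂ g :=
    Computable.option_getD
      (Computable.option_map (Computable.decode.comp Computable.snd)
        (hf.comp (Computable.fst.comp Computable.fst) Computable.snd).to₂)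
      (Computable.const false)
  have hpart : Partrec fun a => (Nat.rfind fun n => Part.some (g a n)).map fun _ => () :=
    (Partrec.rfind (hgc.partrec₂)).map (Computable.const ()).to₂
  apply hpart.of_eq
  intro a
  apply Part.ext
  intro u
  rw [Part.mem_assert_iff]
  simp only [Part.mem_map_iff, Nat.mem_rfind (p := fun n => Part.some (g a n)), Part.mem_some_iff]
  constructor
  · rintro ⟨n, ⟨hn, -⟩, -⟩
    rcases h : (Encodable.decode (α := γ) n) with _ | c
    · rw [hg] at hn; simp [h] at hn
    · refine ⟨⟨c, ?_⟩, trivial⟩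
      rw [hg] at hn
      simpa [h] using hn.symm
  · rintro ⟨⟨c, hc⟩, -⟩
    have hd : g a (Encodable.encode c) = true := by simp [hg, Encodable.encodek, hc]
    obtain ⟨n, hn, -⟩ := Nat.rfind_min' (p := g a) hd
    refine ⟨n, ⟨?_, fun {m} hm => ?_⟩, trivial⟩
    · simpa using Nat.rfind_spec hn
    · simpa using Nat.rfind_min hn hm

end HomRE

open HomRE in
/-- All homomorphisms between two finitely presented groups are recursively
enumerable: the set of tuples of words inducing a homomorphism
`⟨Fin n₁; R₁⟩ → ⟨Fin n₂; R₂⟩` is recursively enumerable. -/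
theorem homomorphisms_re (n₁ n₂ : ℕ) (R₁ : Finset (FreeGroup (Fin n₁)))
    (R₂ : Finset (FreeGroup (Fin n₂))) :
    REPred (fun v : List.Vector (List (Fin n₂ × Bool)) n₁ =>
      ∀ r ∈ R₁,
        FreeGroup.lift (fun i : Fin n₁ => FreeGroup.mk (v.get i)) r ∈
          Subgroup.normalClosure (↑R₂ : Set (FreeGroup (Fin n₂)))) := by
  classical
  set ws : List (List (Fin n₁ × Bool)) := R₁.toList.map FreeGroup.toWord with hws
  set rels : List (List (Fin n₂ × Bool)) := R₂.toList.map FreeGroup.toWord with hrels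
  have hcomp : Computable₂ (fun (v : List.Vector (List (Fin n₂ × Bool)) n₁)
      (certs : List (List (List (Fin n₂ × Bool) × ℕ × Bool))) => checkAll ws rels (v, certs)) :=
    (primrec_checkAll ws rels).to_comp.to₂
  refine (re_of_bool hcomp).of_eq ?_
  intro v
  set f : Fin n₁ → FreeGroup (Fin n₂) := fun i => FreeGroup.mk (v.get i) with hf
  have key : ∀ r : FreeGroup (Fin n₁),
      FreeGroup.lift f r = FreeGroup.mk (subWord v (FreeGroup.toWord r)) := by
    intro r
    rw [mk_subWord, FreeGroup.mk_toWord]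
  constructor
  · rintro ⟨certs, hC⟩ r hr
    rw [checkAll_iff] at hC
    have hrL : r ∈ R₁.toList := Finset.mem_toList.2 hr
    set k := R₁.toList.idxOf r with hk
    have hkl : k < R₁.toList.length := List.idxOf_lt_length_iff.2 hrL
    have hklen : k < ws.length := by simpa [hws] using hkl
    have hget : ws.getD k [] = FreeGroup.toWord r := by
      rw [hws, List.getD_eq_getElem _ _ (by simpa using hkl)]
      simp [hk, List.getElem_idxOf]
    have := hC k (List.mem_range.2 hklen)
    rw [hget] at this
    have hmk : FreeGroup.mk (prodWord rels (certs.getD k [])) =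
        FreeGroup.mk (subWord v (FreeGroup.toWord r)) := mk_eq_iff.2 this
    rw [key r, ← hmk, hrels]
    exact mk_prodWord_mem R₂ _
  · intro h
    have hex : ∀ k : ℕ, ∃ cert,
        red (prodWord rels cert) = red (subWord v (ws.getD k [])) := by
      intro k
      by_cases hkl : k < ws.length
      · have hkl' : k < R₁.toList.length := by simpa [hws] using hkl
        have hget : ws.getD k [] = FreeGroup.toWord (R₁.toList[k]) := by
          rw [hws, List.getD_eq_getElem _ _ (by simpa [hws] using hkl)]
          show (R₁.toList.map FreeGroup.toWord)[k]'_ = _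
          simp
        have hmem : R₁.toList[k] ∈ R₁ := Finset.mem_toList.1 (List.getElem_mem hkl')
        have hN := h _ hmem
        rw [key] at hN
        rw [hrels]
        rw [hget]
        exact (mem_iff R₂ _).1 hN
      · refine ⟨[], ?_⟩
        rw [List.getD_eq_default _ _ (le_of_not_gt hkl)]
        rfl
    choose F hF using hex
    refine ⟨(List.range ws.length).map F, ?_⟩
    rw [checkAll_iff]
    intro k hkr
    have hkl : k < ws.length := List.mem_range.1 hkr
    have : ((List.range ws.length).map F).getD k [] = F k := by
      rw [List.getD_eq_getElem _ _ (by simpa using hkl)]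
      simp
    rw [this]
    exact hF k
end

section
/- Non-freeness of a tuple in a recursively presented group is semi-decidable: let n : ℕ and let R ⊆ FreeGroup (Fin n) satisfy REPred (fun l : List (Fin n × Bool) => FreeGroup.mk l ∈ R), and let k : ℕ. Then the set of k-tuples of words whose images in the presented group ⟨Fin n; R⟩ satisfy some nontrivial relation (i.e., do not freely generate a free subgroup of rank k) is recursively enumerable: REPred (fun v : List.Vector (List (Fin n × Bool)) k => ∃ w : FreeGroup (Fin k), w ≠ 1 ∧ FreeGroup.lift (fun i : Fin k => FreeGroup.mk (v.get i)) w ∈ Subgroup.normalClosure R). -/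
set_option linter.unusedSectionVars false

namespace NonfreeAux

open Nat.Partrec (Code)
open Nat.Partrec.Code Encodable

section Computability

variable {α : Type*} {β : Type*} [Primcodable α] [Primcodable β]

theorem rePred_code {q : α → Prop} (h : REPred q) :
    ∃ c : Code, ∀ u : ℕ, (eval c u).Dom ↔ ∃ x ∈ (decode (α := α) u), q x := by
  obtain ⟨c, hc⟩ := Code.exists_code.1 h
  refine ⟨c, fun u => ?_⟩
  rw [hc]
  simp only [Part.dom_iff_mem, Part.mem_bind_iff, Part.mem_assert_iff, Part.mem_coe,
    Part.mem_map_iff, Option.mem_def]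
  aesop

theorem decode_pair_encode (a : α) (e : ℕ) :
    (decode (Nat.pair (encode a) e) : Option (α × β)) =
      (decode e : Option β).map fun b => (a, b) := by
  simp [Encodable.decode_prod_val]

theorem dom_pair_iff {q : α × β → Prop} {c : Code}
    (hc : ∀ u : ℕ, (eval c u).Dom ↔ ∃ x ∈ (decode (α := α × β) u), q x) (a : α) (e : ℕ) :
    (eval c (Nat.pair (encode a) e)).Dom ↔ ∃ b ∈ (decode (α := β) e), q (a, b) := by
  rw [hc, decode_pair_encode]
  cases (decode (α := β) e) <;> simp

theorem isSome_dom {c : Code} {u m : ℕ} (h : (evaln m c u).isSome) : (eval c u).Dom := by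
  obtain ⟨y, hy⟩ := Option.isSome_iff_exists.1 h
  exact Part.dom_iff_mem.2 ⟨y, evaln_complete.2 ⟨m, hy⟩⟩

theorem dom_isSome {c : Code} {u : ℕ} (h : (eval c u).Dom) : ∃ m, (evaln m c u).isSome := by
  obtain ⟨y, hy⟩ := Part.dom_iff_mem.1 h
  obtain ⟨m, hm⟩ := evaln_complete.1 hy
  exact ⟨m, Option.isSome_iff_exists.2 ⟨y, hm⟩⟩

theorem isSome_mono {c : Code} {u m m' : ℕ} (hmm : m ≤ m') (h : (evaln m c u).isSome) :
    (evaln m' c u).isSome := by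
  obtain ⟨y, hy⟩ := Option.isSome_iff_exists.1 h
  exact Option.isSome_iff_exists.2 ⟨y, evaln_mono hmm hy⟩

theorem foldr_and_iff {g : β → Bool} (l : List β) :
    l.foldr (fun b r => g b && r) true = true ↔ ∀ b ∈ l, g b = true := by
  induction l with
  | nil => simp
  | cons b l ih => simp [ih]

theorem rePred_exists {q : α × β → Prop} (h : REPred q) :
    REPred fun a : α => ∃ b : β, q (a, b) := by
  obtain ⟨c, hc⟩ := rePred_code h
  have hprim : Primrec₂ fun (a : α) (m : ℕ) =>
      (evaln m.unpair.1 c (Nat.pair (encode a) m.unpair.2)).map fun _ => () := by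
    refine Primrec.option_map ?_ (Primrec₂.const ())
    exact primrec_evaln.comp <|
      Primrec.pair
        (Primrec.pair (Primrec.fst.comp (Primrec.unpair.comp Primrec.snd)) (Primrec.const c))
        (Primrec₂.natPair.comp (Primrec.encode.comp Primrec.fst)
          (Primrec.snd.comp (Primrec.unpair.comp Primrec.snd)))
  refine (Partrec.rfindOpt hprim.to_comp).dom_re.of_eq fun a => ?_
  rw [Nat.rfindOpt_dom]
  constructor
  · rintro ⟨m, u, hu⟩
    simp only [Option.mem_def, Option.map_eq_some_iff] at hu
    obtain ⟨y, hy, -⟩ := hu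
    have hd := isSome_dom (c := c) (Option.isSome_iff_exists.2 ⟨y, hy⟩)
    rw [dom_pair_iff hc] at hd
    obtain ⟨b, -, hq⟩ := hd
    exact ⟨b, hq⟩
  · rintro ⟨b, hb⟩
    have : (eval c (Nat.pair (encode a) (encode b))).Dom :=
      (dom_pair_iff hc a (encode b)).2 ⟨b, by simp, hb⟩
    obtain ⟨m, hm⟩ := dom_isSome this
    refine ⟨Nat.pair m (encode b), (), ?_⟩
    simp only [Nat.unpair_pair, Option.mem_def, Option.map_eq_some_iff]
    obtain ⟨y, hy⟩ := Option.isSome_iff_exists.1 hm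
    exact ⟨y, hy, trivial⟩

theorem hfold_prim (c : Code) : Primrec fun x : (α × List β) × ℕ =>
    x.1.2.foldr (fun b r =>
      (evaln x.2 c (Nat.pair (encode x.1.1) (encode b))).isSome && r) true := by
  have h1 : Primrec fun p : ((α × List β) × ℕ) × β × Bool =>
      ((p.1.2, c), Nat.pair (encode p.1.1.1) (encode p.2.1)) :=
    Primrec.pair
      (Primrec.pair (Primrec.snd.comp Primrec.fst) (Primrec.const c))
      (Primrec₂.natPair.comp (Primrec.encode.comp (Primrec.fst.comp (Primrec.fst.comp Primrec.fst)))
        (Primrec.encode.comp (Primrec.fst.comp Primrec.snd)))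
  have h2 : Primrec fun p : ((α × List β) × ℕ) × β × Bool =>
      evaln p.1.2 c (Nat.pair (encode p.1.1.1) (encode p.2.1)) := primrec_evaln.comp h1
  have h3 : Primrec fun p : ((α × List β) × ℕ) × β × Bool =>
      ((evaln p.1.2 c (Nat.pair (encode p.1.1.1) (encode p.2.1))).isSome && p.2.2 : Bool) :=
    Primrec₂.comp Primrec.and (Primrec.option_isSome.comp h2) (Primrec.snd.comp Primrec.snd)
  exact Primrec.list_foldr
    (f := fun x : (α × List β) × ℕ => x.1.2)
    (g := fun _ => true)
    (h := fun x br => (evaln x.2 c (Nat.pair (encode x.1.1) (encode br.1))).isSome && br.2)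
    (Primrec.snd.comp Primrec.fst) (Primrec.const true) h3

theorem rePred_forall_mem {q : α × β → Prop} (h : REPred q) :
    REPred fun p : α × List β => ∀ b ∈ p.2, q (p.1, b) := by
  obtain ⟨c, hc⟩ := rePred_code h
  have hprim : Primrec₂ fun (p : α × List β) (m : ℕ) =>
      (cond (p.2.foldr (fun b r => (evaln m c (Nat.pair (encode p.1) (encode b))).isSome && r) true)
        (Option.some ()) Option.none : Option Unit) :=
    Primrec.cond (hfold_prim c) (Primrec.const (Option.some ())) (Primrec.const Option.none)
  refine (Partrec.rfindOpt hprim.to_comp).dom_re.of_eq fun p => ?_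
  rw [Nat.rfindOpt_dom]
  constructor
  · rintro ⟨m, u, hu⟩
    simp only [Option.mem_def] at hu
    have hcond : (p.2.foldr (fun b r =>
        (evaln m c (Nat.pair (encode p.1) (encode b))).isSome && r) true) = true := by
      by_contra hne
      rw [Bool.not_eq_true] at hne
      rw [hne] at hu
      simp at hu
    rw [foldr_and_iff] at hcond
    intro b hb
    have hd := isSome_dom (hcond b hb)
    rw [dom_pair_iff hc] at hd
    obtain ⟨b', hb', hq⟩ := hd
    simp only [Option.mem_def, Encodable.encodek, Option.some_inj] at hb'
    rwa [← hb'] at hq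
  · intro hall
    have key : ∀ l : List β, (∀ b ∈ l, q (p.1, b)) → ∃ m, ∀ b ∈ l,
        (evaln m c (Nat.pair (encode p.1) (encode b))).isSome = true := by
      intro l hl
      induction l with
      | nil => exact ⟨0, by simp⟩
      | cons b t ih =>
        obtain ⟨m, hm⟩ := ih (fun b hb => hl b (List.mem_cons_of_mem _ hb))
        obtain ⟨m', hm'⟩ := dom_isSome ((dom_pair_iff hc p.1 (encode b)).2
          ⟨b, by simp, hl b (List.mem_cons_self)⟩)
        refine ⟨max m m', fun b' hb' => ?_⟩
        rcases List.mem_cons.1 hb' with rfl | hb'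
        · exact isSome_mono (le_max_right _ _) hm'
        · exact isSome_mono (le_max_left _ _) (hm b' hb')
    obtain ⟨m, hm⟩ := key p.2 hall
    refine ⟨m, (), ?_⟩
    simp only [Option.mem_def]
    rw [(foldr_and_iff _).2 hm]
    rfl

theorem rePred_and {p q : α → Prop} (hp : REPred p) (hq : REPred q) :
    REPred fun a => p a ∧ q a := by
  have h : Partrec fun a =>
      (Part.assert (p a) fun _ => Part.some ()).bind fun _ =>
        Part.assert (q a) fun _ => Part.some () :=
    hp.bind (hq.comp Computable.fst)
  refine h.dom_re.of_eq fun a => ?_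
  simp only [Part.dom_iff_mem, Part.mem_bind_iff, Part.mem_assert_iff, Part.mem_some_iff]
  aesop

theorem primrecPred_re {p : α → Prop} [DecidablePred p] (h : PrimrecPred p) : REPred p :=
  ComputablePred.to_re <| ComputablePred.computable_iff.2
    ⟨fun a => decide (p a), h.decide.to_comp, funext fun a => by simp⟩

end Computability

section Reduce

variable {α : Type*} [Primcodable α] [DecidableEq α]

theorem primrec_invRev : Primrec (FreeGroup.invRev (α := α)) := by
  have h : Primrec fun l : List (α × Bool) => (l.map fun x => (x.1, !x.2)).reverse :=
    Primrec.list_reverse.comp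
      (Primrec.list_map Primrec.id
        ((Primrec.pair (Primrec.fst.comp Primrec.snd)
          (Primrec.not.comp (Primrec.snd.comp Primrec.snd)))))
  exact h.of_eq fun l => by simp [FreeGroup.invRev]

theorem primrec_reduce : Primrec (FreeGroup.reduce (α := α)) := by
  have hcases : Primrec₂ fun (l : List (α × Bool))
      (y : (α × Bool) × List (α × Bool) × List (α × Bool)) =>
      (List.casesOn y.2.2 [y.1] fun hd2 tl2 =>
        if y.1.1 = hd2.1 ∧ y.1.2 = !hd2.2 then tl2 else y.1 :: hd2 :: tl2 :
        List (α × Bool)) := by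
    show Primrec fun x : List (α × Bool) × (α × Bool) × List (α × Bool) × List (α × Bool) =>
      (List.casesOn x.2.2.2 [x.2.1] fun hd2 tl2 =>
        if x.2.1.1 = hd2.1 ∧ x.2.1.2 = !hd2.2 then tl2 else x.2.1 :: hd2 :: tl2 :
        List (α × Bool))
    refine Primrec.list_casesOn
      (f := fun x : List (α × Bool) × (α × Bool) × List (α × Bool) × List (α × Bool) => x.2.2.2)
      (g := fun x => [x.2.1])
      (h := fun x y => if x.2.1.1 = y.1.1 ∧ x.2.1.2 = !y.1.2 then y.2 else x.2.1 :: y.1 :: y.2)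
      (Primrec.snd.comp (Primrec.snd.comp Primrec.snd))
      (Primrec.list_cons.comp (Primrec.fst.comp Primrec.snd) (Primrec.const []))
      ?_
    refine Primrec.ite ?_ (Primrec.snd.comp Primrec.snd) ?_
    · refine PrimrecPred.and ?_ ?_
      · exact (Primrec.eq (α := α)).comp
          (Primrec.fst.comp (Primrec.fst.comp (Primrec.snd.comp Primrec.fst)))
          (Primrec.fst.comp (Primrec.fst.comp Primrec.snd))
      · exact (Primrec.eq (α := Bool)).comp
          (Primrec.snd.comp (Primrec.fst.comp (Primrec.snd.comp Primrec.fst)))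
          (Primrec.not.comp (Primrec.snd.comp (Primrec.fst.comp Primrec.snd)))
    · exact Primrec.list_cons.comp (Primrec.fst.comp (Primrec.snd.comp Primrec.fst))
        (Primrec.list_cons.comp (Primrec.fst.comp Primrec.snd) (Primrec.snd.comp Primrec.snd))
  have h : Primrec fun l : List (α × Bool) =>
      (List.rec ([] : List (α × Bool)) (fun hd1 tl1 ih =>
        (List.casesOn ih [hd1] fun hd2 tl2 =>
          if hd1.1 = hd2.1 ∧ hd1.2 = !hd2.2 then tl2 else hd1 :: hd2 :: tl2 : List (α × Bool))) l :
        List (α × Bool)) :=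
    Primrec.list_rec Primrec.id (Primrec.const []) hcases
  refine h.of_eq fun l => ?_
  induction l with
  | nil => rfl
  | cons hd tl ih => rw [FreeGroup.reduce.cons, ← ih]

end Reduce

variable {n k : ℕ}

def substWord (v : List.Vector (List (Fin n × Bool)) k) (w : List (Fin k × Bool)) :
    List (Fin n × Bool) :=
  (w.map fun p => cond p.2 (v.get p.1) (FreeGroup.invRev (v.get p.1))).flatten

def relWord (L : List (List (Fin n × Bool) × List (Fin n × Bool) × Bool)) :
    List (Fin n × Bool) :=
  (L.map fun t =>
    t.1 ++ (cond t.2.2 t.2.1 (FreeGroup.invRev t.2.1)) ++ FreeGroup.invRev t.1).flatten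

theorem mk_substWord (v : List.Vector (List (Fin n × Bool)) k) (w : List (Fin k × Bool)) :
    FreeGroup.mk (substWord v w) =
      FreeGroup.lift (fun i : Fin k => FreeGroup.mk (v.get i)) (FreeGroup.mk w) := by
  rw [FreeGroup.lift_mk]
  induction w with
  | nil => rfl
  | cons p t ih =>
    have : substWord v (p :: t) =
        (cond p.2 (v.get p.1) (FreeGroup.invRev (v.get p.1))) ++ substWord v t := by
      simp [substWord]
    rw [this, ← FreeGroup.mul_mk, ih, List.map_cons, List.prod_cons]
    congr 1
    cases hb : p.2 <;> simp [FreeGroup.inv_mk]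

theorem mk_relWord (L : List (List (Fin n × Bool) × List (Fin n × Bool) × Bool)) :
    FreeGroup.mk (relWord L) =
      (L.map fun t => FreeGroup.mk t.1 *
        (cond t.2.2 (FreeGroup.mk t.2.1) (FreeGroup.mk t.2.1)⁻¹) * (FreeGroup.mk t.1)⁻¹).prod := by
  induction L with
  | nil => rfl
  | cons t L ih =>
    have : relWord (t :: L) =
        (t.1 ++ (cond t.2.2 t.2.1 (FreeGroup.invRev t.2.1)) ++ FreeGroup.invRev t.1)
          ++ relWord L := by
      simp [relWord]
    rw [this, ← FreeGroup.mul_mk, ih, List.map_cons, List.prod_cons]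
    congr 1
    rw [← FreeGroup.mul_mk, ← FreeGroup.mul_mk, FreeGroup.inv_mk]
    cases hb : t.2.2 <;> simp [FreeGroup.inv_mk]

theorem exists_L (R : Set (FreeGroup (Fin n))) (l : List (FreeGroup (Fin n)))
    (hl : ∀ y ∈ l, y ∈ Group.conjugatesOfSet R ∪ (Group.conjugatesOfSet R)⁻¹) :
    ∃ L : List (List (Fin n × Bool) × List (Fin n × Bool) × Bool),
      (∀ t ∈ L, FreeGroup.mk t.2.1 ∈ R) ∧ FreeGroup.mk (relWord L) = l.prod := by
  induction l with
  | nil => exact ⟨[], by simp, by simp [relWord]; rfl⟩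
  | cons y l ih =>
    obtain ⟨L, hL, hprod⟩ := ih fun z hz => hl z (List.mem_cons_of_mem _ hz)
    rcases hl y (List.mem_cons_self) with hy | hy
    · obtain ⟨r, hr, hconj⟩ := Group.mem_conjugatesOfSet_iff.1 hy
      obtain ⟨c, hc⟩ := isConj_iff.1 hconj
      refine ⟨(c.toWord, r.toWord, true) :: L, ?_, ?_⟩
      · intro t ht
        rcases List.mem_cons.1 ht with h | h
        · rw [h]; simpa [FreeGroup.mk_toWord] using hr
        · exact hL t h
      · rw [mk_relWord] at hprod ⊢
        rw [List.map_cons, List.prod_cons, hprod, List.prod_cons]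
        simp only [cond_true, FreeGroup.mk_toWord]
        rw [hc]
    · rw [Set.mem_inv] at hy
      obtain ⟨r, hr, hconj⟩ := Group.mem_conjugatesOfSet_iff.1 hy
      obtain ⟨c, hc⟩ := isConj_iff.1 hconj
      refine ⟨(c.toWord, r.toWord, false) :: L, ?_, ?_⟩
      · intro t ht
        rcases List.mem_cons.1 ht with h | h
        · rw [h]; simpa [FreeGroup.mk_toWord] using hr
        · exact hL t h
      · rw [mk_relWord] at hprod ⊢
        rw [List.map_cons, List.prod_cons, hprod, List.prod_cons]
        simp only [cond_false, FreeGroup.mk_toWord]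
        have : y = c * r⁻¹ * c⁻¹ := by
          have := congrArg (·⁻¹) hc
          simp only [mul_inv_rev, inv_inv] at this
          rw [← this]; group
        rw [this]

theorem main_iff (R : Set (FreeGroup (Fin n))) (v : List.Vector (List (Fin n × Bool)) k) :
    (∃ w : FreeGroup (Fin k), w ≠ 1 ∧
        FreeGroup.lift (fun i : Fin k => FreeGroup.mk (v.get i)) w ∈
          Subgroup.normalClosure R) ↔
    ∃ x : List (Fin k × Bool) × List (List (Fin n × Bool) × List (Fin n × Bool) × Bool),
      ((FreeGroup.reduce x.1 ≠ [] ∧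
        FreeGroup.reduce (substWord v x.1) = FreeGroup.reduce (relWord x.2)) ∧
        ∀ t ∈ x.2, FreeGroup.mk t.2.1 ∈ R) := by
  constructor
  · rintro ⟨w, hw, hmem⟩
    have hmem' : FreeGroup.lift (fun i : Fin k => FreeGroup.mk (v.get i)) w ∈
        Submonoid.closure (Group.conjugatesOfSet R ∪ (Group.conjugatesOfSet R)⁻¹) := by
      rw [← Subgroup.closure_toSubmonoid]
      exact hmem
    obtain ⟨l, hl, hprod⟩ := Submonoid.exists_list_of_mem_closure hmem'
    obtain ⟨L, hL, hLprod⟩ := exists_L R l hl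
    refine ⟨(w.toWord, L), ⟨?_, ?_⟩, hL⟩
    · rw [FreeGroup.reduce_toWord]
      exact fun h => hw (FreeGroup.toWord_eq_nil_iff.1 h)
    · have h1 : FreeGroup.mk (substWord v w.toWord) = FreeGroup.mk (relWord L) := by
        rw [mk_substWord, FreeGroup.mk_toWord, hLprod, hprod]
      have := congrArg FreeGroup.toWord h1
      rwa [FreeGroup.toWord_mk, FreeGroup.toWord_mk] at this
  · rintro ⟨⟨u, L⟩, ⟨hne, heq⟩, hL⟩
    refine ⟨FreeGroup.mk u, ?_, ?_⟩
    · intro h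
      apply hne
      rw [← FreeGroup.toWord_mk, h, FreeGroup.toWord_one]
    · have h1 : FreeGroup.lift (fun i : Fin k => FreeGroup.mk (v.get i)) (FreeGroup.mk u) =
          FreeGroup.mk (relWord L) := by
        rw [← mk_substWord]
        apply FreeGroup.toWord_injective
        rwa [FreeGroup.toWord_mk, FreeGroup.toWord_mk]
      rw [h1, mk_relWord]
      haveI hnorm : (Subgroup.normalClosure R).Normal := Subgroup.normalClosure_normal
      refine list_prod_mem fun z hz => ?_
      simp only [List.mem_map] at hz
      obtain ⟨t, ht, rfl⟩ := hz
      have hr : FreeGroup.mk t.2.1 ∈ Subgroup.normalClosure R :=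
        Subgroup.subset_normalClosure (hL t ht)
      have hmid : (cond t.2.2 (FreeGroup.mk t.2.1) (FreeGroup.mk t.2.1)⁻¹) ∈
          Subgroup.normalClosure R := by
        cases t.2.2
        · exact inv_mem hr
        · exact hr
      exact hnorm.conj_mem _ hmid _

theorem primrec_substWord : Primrec fun x :
    List.Vector (List (Fin n × Bool)) k × List (Fin k × Bool) × List (List (Fin n × Bool) × List (Fin n × Bool) × Bool) =>
    substWord x.1 x.2.1 := by
  have hget : Primrec fun y : (List.Vector (List (Fin n × Bool)) k × List (Fin k × Bool) ×
      List (List (Fin n × Bool) × List (Fin n × Bool) × Bool)) × (Fin k × Bool) =>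
      y.1.1.get y.2.1 :=
    Primrec.vector_get.comp (Primrec.fst.comp Primrec.fst) (Primrec.fst.comp Primrec.snd)
  have hmap : Primrec fun x : List.Vector (List (Fin n × Bool)) k × List (Fin k × Bool) ×
      List (List (Fin n × Bool) × List (Fin n × Bool) × Bool) =>
      x.2.1.map fun p => cond p.2 (x.1.get p.1) (FreeGroup.invRev (x.1.get p.1)) :=
    Primrec.list_map (Primrec.fst.comp Primrec.snd)
      (Primrec.cond (Primrec.snd.comp Primrec.snd) hget (primrec_invRev.comp hget))
  exact Primrec.list_flatten.comp hmap

theorem primrec_relWord : Primrec fun x :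
    List.Vector (List (Fin n × Bool)) k × List (Fin k × Bool) × List (List (Fin n × Bool) × List (Fin n × Bool) × Bool) =>
    relWord x.2.2 := by
  have ht1 : Primrec fun y : (List.Vector (List (Fin n × Bool)) k × List (Fin k × Bool) ×
      List (List (Fin n × Bool) × List (Fin n × Bool) × Bool)) ×
      (List (Fin n × Bool) × List (Fin n × Bool) × Bool) => y.2.1 :=
    Primrec.fst.comp Primrec.snd
  have hr1 : Primrec fun y : (List.Vector (List (Fin n × Bool)) k × List (Fin k × Bool) ×
      List (List (Fin n × Bool) × List (Fin n × Bool) × Bool)) ×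
      (List (Fin n × Bool) × List (Fin n × Bool) × Bool) => y.2.2.1 :=
    Primrec.fst.comp (Primrec.snd.comp Primrec.snd)
  have hmid : Primrec fun y : (List.Vector (List (Fin n × Bool)) k × List (Fin k × Bool) ×
      List (List (Fin n × Bool) × List (Fin n × Bool) × Bool)) ×
      (List (Fin n × Bool) × List (Fin n × Bool) × Bool) =>
      cond y.2.2.2 y.2.2.1 (FreeGroup.invRev y.2.2.1) :=
    Primrec.cond (Primrec.snd.comp (Primrec.snd.comp Primrec.snd)) hr1 (primrec_invRev.comp hr1)
  have hmap : Primrec fun x : List.Vector (List (Fin n × Bool)) k × List (Fin k × Bool) ×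
      List (List (Fin n × Bool) × List (Fin n × Bool) × Bool) =>
      x.2.2.map fun t => t.1 ++ (cond t.2.2 t.2.1 (FreeGroup.invRev t.2.1)) ++ FreeGroup.invRev t.1 :=
    Primrec.list_map (Primrec.snd.comp Primrec.snd)
      (Primrec.list_append.comp (Primrec.list_append.comp ht1 hmid) (primrec_invRev.comp ht1))
  exact Primrec.list_flatten.comp hmap

end NonfreeAux

/-- Non-freeness of a tuple in a recursively presented group is semi-decidable:
the set of `k`-tuples of words whose images in `⟨Fin n; R⟩` satisfy some
nontrivial relation is recursively enumerable. -/
theorem nonfreeness_re (n : ℕ) (R : Set (FreeGroup (Fin n)))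
    (hR : REPred (fun l : List (Fin n × Bool) => FreeGroup.mk l ∈ R)) (k : ℕ) :
    REPred (fun v : List.Vector (List (Fin n × Bool)) k =>
      ∃ w : FreeGroup (Fin k), w ≠ 1 ∧
        FreeGroup.lift (fun i : Fin k => FreeGroup.mk (v.get i)) w ∈
          Subgroup.normalClosure R) := by
  classical
  let T := List (Fin n × Bool) × List (Fin n × Bool) × Bool
  let γ := List.Vector (List (Fin n × Bool)) k × List (Fin k × Bool) × List T
  -- the decidable part
  have hne : PrimrecPred fun x : γ => ¬(FreeGroup.reduce x.2.1 = []) :=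
    PrimrecPred.not <| (Primrec.eq).comp
      (NonfreeAux.primrec_reduce.comp (Primrec.fst.comp Primrec.snd)) (Primrec.const [])
  have heq : PrimrecPred fun x : γ =>
      FreeGroup.reduce (NonfreeAux.substWord x.1 x.2.1) =
        FreeGroup.reduce (NonfreeAux.relWord x.2.2) :=
    (Primrec.eq).comp (NonfreeAux.primrec_reduce.comp NonfreeAux.primrec_substWord)
      (NonfreeAux.primrec_reduce.comp NonfreeAux.primrec_relWord)
  have hQ1 : REPred fun x : γ =>
      (FreeGroup.reduce x.2.1 ≠ [] ∧
        FreeGroup.reduce (NonfreeAux.substWord x.1 x.2.1) =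
          FreeGroup.reduce (NonfreeAux.relWord x.2.2)) :=
    NonfreeAux.primrecPred_re (hne.and heq)
  -- the r.e. part
  have hq : REPred fun y : γ × T => FreeGroup.mk y.2.2.1 ∈ R :=
    hR.comp (Computable.fst.comp (Computable.snd.comp Computable.snd))
  have hforall := NonfreeAux.rePred_forall_mem hq
  have hQ2 : REPred fun x : γ => ∀ t ∈ x.2.2, FreeGroup.mk t.2.1 ∈ R :=
    hforall.comp (Computable.pair Computable.id (Computable.snd.comp Computable.snd))
  have hand := NonfreeAux.rePred_and hQ1 hQ2
  have hexists := NonfreeAux.rePred_exists hand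
  exact hexists.of_eq fun v => (NonfreeAux.main_iff R v).symm
end
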